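/- Let I ⊆ ℝ be an open interval, Ω' ⊆ ℝ³ open, v : I × Ω' → ℝ³ a C¹ vector field, ξ : I × Ω' → ℝ³ of class C¹ satisfying ∂_t ξ + (v·∇_x)ξ = 0, and J : I × Ω' → (0,∞) of class C¹ satisfying ∂_t J + v·∇_x J = J div v. Let φ : ℝ³ × (0,∞) → ℝ be C¹, written φ(X,J) with partial derivative ∂_J φ. Then the actual stored energy density satisfies the pointwise balance ∂_t( φ(ξ,J)/J ) + div( (φ(ξ,J)/J) v ) = (∂_J φ)(ξ,J) · div v on I × Ω'. In particular, with the pressure p = −(∂_J φ)(ξ,J), the right-hand side equals −p div v. -/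

import Mathlib

open Set

/-- Time partial derivative of a scalar field. -/
noncomputable def dt (f : ℝ → (Fin 3 → ℝ) → ℝ) (t : ℝ) (x : Fin 3 → ℝ) : ℝ :=
  deriv (fun s => f s x) t

/-- Spatial partial derivative (in the `j`-th coordinate direction) of a scalar field. -/
noncomputable def dx (f : ℝ → (Fin 3 → ℝ) → ℝ) (t : ℝ) (x : Fin 3 → ℝ) (j : Fin 3) : ℝ :=
  fderiv ℝ (fun z => f t z) x (Pi.single j 1)

lemma dt_eq {f : ℝ → (Fin 3 → ℝ) → ℝ} {L : (ℝ × (Fin 3 → ℝ)) →L[ℝ] ℝ} {t : ℝ} {x : Fin 3 → ℝ}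
    (h : HasFDerivAt (fun p : ℝ × (Fin 3 → ℝ) => f p.1 p.2) L (t, x)) :
    dt f t x = L (1, (0 : Fin 3 → ℝ)) := by
  have hc : HasDerivAt (fun s : ℝ => ((s, x) : ℝ × (Fin 3 → ℝ))) ((1:ℝ), (0 : Fin 3 → ℝ)) t :=
    (hasDerivAt_id t).prodMk (hasDerivAt_const t x)
  exact (h.comp_hasDerivAt t hc).deriv

lemma dx_eq {f : ℝ → (Fin 3 → ℝ) → ℝ} {L : (ℝ × (Fin 3 → ℝ)) →L[ℝ] ℝ} {t : ℝ} {x : Fin 3 → ℝ}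
    (h : HasFDerivAt (fun p : ℝ × (Fin 3 → ℝ) => f p.1 p.2) L (t, x)) (j : Fin 3) :
    dx f t x j = L (0, Pi.single j 1) := by
  have hm : HasFDerivAt (fun z : Fin 3 → ℝ => ((t, z) : ℝ × (Fin 3 → ℝ)))
      (ContinuousLinearMap.inr ℝ ℝ (Fin 3 → ℝ)) x := hasFDerivAt_prodMk_right t x
  have h3 : fderiv ℝ (fun z => f t z) x
      = L.comp (ContinuousLinearMap.inr ℝ ℝ (Fin 3 → ℝ)) := (h.comp x hm).fderiv
  show fderiv ℝ (fun z => f t z) x (Pi.single j 1) = _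
  rw [h3]
  simp

lemma clm_decomp (L : (ℝ × (Fin 3 → ℝ)) →L[ℝ] ℝ) (w : Fin 3 → ℝ) :
    L (1, w) = L (1, (0 : Fin 3 → ℝ)) + ∑ k, w k * L (0, Pi.single k 1) := by
  have hw : ((1:ℝ), w) = ((1:ℝ), (0 : Fin 3 → ℝ))
      + ∑ k, w k • (((0:ℝ), (Pi.single k 1 : Fin 3 → ℝ)) : ℝ × (Fin 3 → ℝ)) := by
    rw [Prod.ext_iff]
    constructor
    · simp [Prod.fst_sum]
    · funext j
      simp [Prod.snd_sum, Finset.sum_apply, Pi.single_apply]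
  rw [hw, map_add, map_sum]
  refine congrArg _ (Finset.sum_congr rfl fun k _ => ?_)
  rw [map_smul, smul_eq_mul]

/-- given a velocity field `v`, a return mapping `ξ` transported along `v`,
a positive Jacobian field `J` satisfying `J̇ = J div v`, and a C¹ stored energy
`φ(X,J)`, the actual stored energy density `φ(ξ,J)/J` satisfies
`∂_t(φ(ξ,J)/J) + div((φ(ξ,J)/J)v) = (∂_J φ)(ξ,J)·div v = −p div v` with the pressure
`p = −(∂_J φ)(ξ,J)`. -/
theorem stored_energy_balance
    (a b : ℝ) (Ω' : Set (Fin 3 → ℝ)) (hΩ' : IsOpen Ω')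
    (v ξ : ℝ → (Fin 3 → ℝ) → (Fin 3 → ℝ)) (J : ℝ → (Fin 3 → ℝ) → ℝ)
    (hv : ContDiffOn ℝ 1 (fun p : ℝ × (Fin 3 → ℝ) => v p.1 p.2) (Ioo a b ×ˢ Ω'))
    (hξ : ContDiffOn ℝ 1 (fun p : ℝ × (Fin 3 → ℝ) => ξ p.1 p.2) (Ioo a b ×ˢ Ω'))
    (hJC1 : ContDiffOn ℝ 1 (fun p : ℝ × (Fin 3 → ℝ) => J p.1 p.2) (Ioo a b ×ˢ Ω'))
    (hJpos : ∀ t ∈ Ioo a b, ∀ x ∈ Ω', 0 < J t x)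
    (htransport : ∀ t ∈ Ioo a b, ∀ x ∈ Ω', ∀ i,
      dt (fun s z => ξ s z i) t x + ∑ k, v t x k * dx (fun s z => ξ s z i) t x k = 0)
    (hJ : ∀ t ∈ Ioo a b, ∀ x ∈ Ω',
      dt J t x + ∑ k, v t x k * dx J t x k
        = J t x * ∑ i, dx (fun s z => v s z i) t x i)
    (φ : (Fin 3 → ℝ) → ℝ → ℝ)
    (hφ : ContDiffOn ℝ 1 (fun p : (Fin 3 → ℝ) × ℝ => φ p.1 p.2) (univ ×ˢ Ioi 0)) :
    ∀ t ∈ Ioo a b, ∀ x ∈ Ω',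
      (dt (fun s z => φ (ξ s z) (J s z) / J s z) t x
          + ∑ k, dx (fun s z => (φ (ξ s z) (J s z) / J s z) * v s z k) t x k
        = deriv (φ (ξ t x)) (J t x) * ∑ i, dx (fun s z => v s z i) t x i) ∧
      (deriv (φ (ξ t x)) (J t x) * ∑ i, dx (fun s z => v s z i) t x i
        = -((-(deriv (φ (ξ t x)) (J t x))) * ∑ i, dx (fun s z => v s z i) t x i)) := by
  intro t ht x hx
  refine ⟨?_, by ring⟩
  have hO : IsOpen (Ioo a b ×ˢ Ω') := isOpen_Ioo.prod hΩ'
  have hmem : ((t, x) : ℝ × (Fin 3 → ℝ)) ∈ Ioo a b ×ˢ Ω' := ⟨ht, hx⟩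
  have hnhds := hO.mem_nhds hmem
  have hvd : DifferentiableAt ℝ (fun p : ℝ × (Fin 3 → ℝ) => v p.1 p.2) (t, x) :=
    (hv.differentiableOn one_ne_zero).differentiableAt hnhds
  have hξd : DifferentiableAt ℝ (fun p : ℝ × (Fin 3 → ℝ) => ξ p.1 p.2) (t, x) :=
    (hξ.differentiableOn one_ne_zero).differentiableAt hnhds
  have hJd : DifferentiableAt ℝ (fun p : ℝ × (Fin 3 → ℝ) => J p.1 p.2) (t, x) :=
    (hJC1.differentiableOn one_ne_zero).differentiableAt hnhds
  have hJpos' : 0 < J t x := hJpos t ht x hx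
  have hJne : J t x ≠ 0 := ne_of_gt hJpos'
  have hφd : DifferentiableAt ℝ (fun p : (Fin 3 → ℝ) × ℝ => φ p.1 p.2) (ξ t x, J t x) :=
    (hφ.differentiableOn one_ne_zero).differentiableAt
      ((isOpen_univ.prod isOpen_Ioi).mem_nhds ⟨trivial, hJpos'⟩)
  set Lv := fderiv ℝ (fun p : ℝ × (Fin 3 → ℝ) => v p.1 p.2) (t, x) with hLv
  set Lξ := fderiv ℝ (fun p : ℝ × (Fin 3 → ℝ) => ξ p.1 p.2) (t, x) with hLξ
  set LJ := fderiv ℝ (fun p : ℝ × (Fin 3 → ℝ) => J p.1 p.2) (t, x) with hLJ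
  set Lφ := fderiv ℝ (fun p : (Fin 3 → ℝ) × ℝ => φ p.1 p.2) (ξ t x, J t x) with hLφ
  have hvF : HasFDerivAt (fun p : ℝ × (Fin 3 → ℝ) => v p.1 p.2) Lv (t, x) := hvd.hasFDerivAt
  have hξF : HasFDerivAt (fun p : ℝ × (Fin 3 → ℝ) => ξ p.1 p.2) Lξ (t, x) := hξd.hasFDerivAt
  have hJF : HasFDerivAt (fun p : ℝ × (Fin 3 → ℝ) => J p.1 p.2) LJ (t, x) := hJd.hasFDerivAt
  have hφF : HasFDerivAt (fun p : (Fin 3 → ℝ) × ℝ => φ p.1 p.2) Lφ (ξ t x, J t x) :=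
    hφd.hasFDerivAt
  -- joint derivative of F = φ(ξ, J)
  set DF := Lφ.comp (Lξ.prod LJ) with hDF
  have hF : HasFDerivAt (fun p : ℝ × (Fin 3 → ℝ) => φ (ξ p.1 p.2) (J p.1 p.2)) DF (t, x) :=
    hφF.comp (f := fun p : ℝ × (Fin 3 → ℝ) => (ξ p.1 p.2, J p.1 p.2)) (t, x) (hξF.prodMk hJF)
  -- joint derivative of 1/J
  set Linv := (ContinuousLinearMap.smulRight (1 : ℝ →L[ℝ] ℝ) (-(J t x ^ 2)⁻¹)).comp LJ with hLinv
  have hinv : HasFDerivAt (fun p : ℝ × (Fin 3 → ℝ) => (J p.1 p.2)⁻¹) Linv (t, x) :=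
    (hasFDerivAt_inv hJne).comp (t, x) hJF
  -- joint derivative of g = φ(ξ,J)/J
  set Lg := φ (ξ t x) (J t x) • Linv + (J t x)⁻¹ • DF with hLg
  have hg : HasFDerivAt (fun p : ℝ × (Fin 3 → ℝ) => φ (ξ p.1 p.2) (J p.1 p.2) / J p.1 p.2)
      Lg (t, x) := by
    simp only [div_eq_mul_inv]
    exact hF.mul hinv
  -- component fields of v and ξ
  have hvk : ∀ k : Fin 3, HasFDerivAt (fun p : ℝ × (Fin 3 → ℝ) => v p.1 p.2 k)
      ((ContinuousLinearMap.proj k : (Fin 3 → ℝ) →L[ℝ] ℝ).comp Lv) (t, x) := fun k =>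
    (ContinuousLinearMap.proj k : (Fin 3 → ℝ) →L[ℝ] ℝ).hasFDerivAt.comp (t, x) hvF
  have hξk : ∀ i : Fin 3, HasFDerivAt (fun p : ℝ × (Fin 3 → ℝ) => ξ p.1 p.2 i)
      ((ContinuousLinearMap.proj i : (Fin 3 → ℝ) →L[ℝ] ℝ).comp Lξ) (t, x) := fun i =>
    (ContinuousLinearMap.proj i : (Fin 3 → ℝ) →L[ℝ] ℝ).hasFDerivAt.comp (t, x) hξF
  -- divergence
  set dv := ∑ i, Lv (0, Pi.single i 1) i with hdv
  have hdiv : (∑ i, dx (fun s z => v s z i) t x i) = dv := by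
    refine Finset.sum_congr rfl fun i _ => ?_
    rw [dx_eq (hvk i)]
    rfl
  -- deriv of φ in second slot
  have hderivφ : deriv (φ (ξ t x)) (J t x) = Lφ ((0 : Fin 3 → ℝ), (1:ℝ)) := by
    have hc : HasDerivAt (fun y : ℝ => ((ξ t x, y) : (Fin 3 → ℝ) × ℝ))
        ((0 : Fin 3 → ℝ), (1:ℝ)) (J t x) :=
      (hasDerivAt_const (J t x) (ξ t x)).prodMk (hasDerivAt_id (J t x))
    exact (hφF.comp_hasDerivAt (J t x) hc).deriv
  -- transport: Lξ U = 0 for U = (1, v t x)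
  have hξU : Lξ (1, v t x) = 0 := by
    funext i
    have h1 := htransport t ht x hx i
    rw [dt_eq (hξk i)] at h1
    have h2 : ∀ k, dx (fun s z => ξ s z i) t x k
        = ((ContinuousLinearMap.proj i : (Fin 3 → ℝ) →L[ℝ] ℝ).comp Lξ) (0, Pi.single k 1) :=
      fun k => dx_eq (hξk i) k
    simp only [h2] at h1
    have := clm_decomp ((ContinuousLinearMap.proj i : (Fin 3 → ℝ) →L[ℝ] ℝ).comp Lξ) (v t x)
    simp only [ContinuousLinearMap.comp_apply, ContinuousLinearMap.proj_apply] at this h1 ⊢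
    rw [this]
    simpa using h1
  -- J equation: LJ U = J * dv
  have hJU : LJ (1, v t x) = J t x * dv := by
    have h1 := hJ t ht x hx
    rw [dt_eq hJF, hdiv] at h1
    have h2 : ∀ k, dx J t x k = LJ (0, Pi.single k 1) := fun k => dx_eq hJF k
    simp only [h2] at h1
    rw [clm_decomp LJ (v t x)]
    exact h1
  -- now rewrite the goal
  rw [dt_eq hg, hdiv, hderivφ]
  have hdxk : ∀ k, dx (fun s z => (φ (ξ s z) (J s z) / J s z) * v s z k) t x k
      = ((φ (ξ t x) (J t x) / J t x) • ((ContinuousLinearMap.proj k : (Fin 3 → ℝ) →L[ℝ] ℝ).comp Lv)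
          + v t x k • Lg) (0, Pi.single k 1) := fun k => dx_eq (hg.mul (hvk k)) k
  simp only [hdxk]
  have hsum : ∑ k, ((φ (ξ t x) (J t x) / J t x)
        • ((ContinuousLinearMap.proj k : (Fin 3 → ℝ) →L[ℝ] ℝ).comp Lv)
          + v t x k • Lg) (0, Pi.single k 1)
      = (φ (ξ t x) (J t x) / J t x) * dv + ∑ k, v t x k * Lg (0, Pi.single k 1) := by
    rw [hdv, Finset.mul_sum, ← Finset.sum_add_distrib]
    refine Finset.sum_congr rfl fun k _ => ?_
    simp [ContinuousLinearMap.add_apply, ContinuousLinearMap.smul_apply]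
  rw [hsum, add_left_comm]
  have hLgU : Lg (1, (0 : Fin 3 → ℝ)) + ∑ k, v t x k * Lg (0, Pi.single k 1)
      = Lg (1, v t x) := (clm_decomp Lg (v t x)).symm
  rw [hLgU]
  -- compute Lg (1, v t x)
  have hLgval : Lg (1, v t x)
      = φ (ξ t x) (J t x) * (-(J t x ^ 2)⁻¹ * (J t x * dv))
        + (J t x)⁻¹ * Lφ (Lξ (1, v t x), LJ (1, v t x)) := by
    simp [hLg, hLinv, hDF, ContinuousLinearMap.add_apply, ContinuousLinearMap.smul_apply,
      ContinuousLinearMap.comp_apply, ContinuousLinearMap.prod_apply,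
      ContinuousLinearMap.smulRight_apply, hJU, mul_comm]
  rw [hLgval, hξU, hJU]
  have hLφsc : Lφ ((0 : Fin 3 → ℝ), J t x * dv) = (J t x * dv) * Lφ ((0 : Fin 3 → ℝ), (1:ℝ)) := by
    have : ((0 : Fin 3 → ℝ), J t x * dv) = (J t x * dv) • (((0 : Fin 3 → ℝ), (1:ℝ))) := by
      simp
    rw [this, map_smul, smul_eq_mul]
  rw [hLφsc]
  field_simp
  ring
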